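/- arXiv:1806.06673 — 3 statements merged into one kernel-verified Lean document; each statement's English description precedes it below -/
import Mathlib

section
/- Let H1, H2, H3 be complex Hilbert spaces, let A : H1 → H2 and B : H2 → H3 be bounded linear operators, and let a, b be real numbers with a ≠ 0 such that A ∘ A* = a · (B* ∘ B) + b · id as operators on H2 (where * denotes the Hilbert-space adjoint). If ψ ∈ H1 satisfies A*Aψ = λ·ψ for some λ ∈ ℂ, then the vector ψ↑ := Aψ satisfies B*B(ψ↑) = ((λ − b)/a) · ψ↑. In particular, if Aψ ≠ 0 it is an eigenvector of B*B with eigenvalue (λ − b)/a. -/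
theorem statement_0
    {H1 H2 H3 : Type*}
    [NormedAddCommGroup H1] [InnerProductSpace ℂ H1] [CompleteSpace H1]
    [NormedAddCommGroup H2] [InnerProductSpace ℂ H2] [CompleteSpace H2]
    [NormedAddCommGroup H3] [InnerProductSpace ℂ H3] [CompleteSpace H3]
    (A : H1 →L[ℂ] H2) (B : H2 →L[ℂ] H3) (a b : ℝ) (ha : a ≠ 0)
    (hcomm : A ∘L ContinuousLinearMap.adjoint A =
      (a : ℂ) • (ContinuousLinearMap.adjoint B ∘L B) + (b : ℂ) • 1)
    (ψ : H1) (lam : ℂ)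
    (hψ : ContinuousLinearMap.adjoint A (A ψ) = lam • ψ) :
    ContinuousLinearMap.adjoint B (B (A ψ)) = ((lam - b) / a) • (A ψ) := by
  have h := congrArg (fun T : H2 →L[ℂ] H2 => T (A ψ)) hcomm
  simp only [ContinuousLinearMap.comp_apply, ContinuousLinearMap.add_apply,
    ContinuousLinearMap.smul_apply, ContinuousLinearMap.one_apply] at h
  rw [hψ, map_smul] at h
  have ha' : (a : ℂ) ≠ 0 := by exact_mod_cast ha
  have : (a : ℂ) • ContinuousLinearMap.adjoint B (B (A ψ)) = (lam - b) • A ψ := by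
    rw [sub_smul]
    exact eq_sub_of_add_eq h.symm
  calc ContinuousLinearMap.adjoint B (B (A ψ))
      = (a : ℂ)⁻¹ • ((a : ℂ) • ContinuousLinearMap.adjoint B (B (A ψ))) := by
        rw [smul_smul, inv_mul_cancel₀ ha', one_smul]
    _ = ((lam - b) / a) • (A ψ) := by rw [this, smul_smul, div_eq_inv_mul]
end

section
/- Let (H_k)_{k ∈ ℕ} be a sequence of complex Hilbert spaces and A_k : H_k → H_{k+1} bounded linear operators, and let a_k, b_k be real numbers with a_k ≠ 0, such that for every k the relation A_k ∘ A_k* = a_k · (A_{k+1}* ∘ A_{k+1}) + b_k · id holds on H_{k+1}. Fix k < l and let ψ_l ∈ H_l satisfy A_l ψ_l = 0. Define eigenvalues recursively by λ_l := 0 and λ_j := a_j · λ_{j+1} + b_j for k ≤ j < l, and define ψ_l^k := A_k* A_{k+1}* ⋯ A_{l-1}* ψ_l ∈ H_k. Then A_k* A_k ψ_l^k = λ_k · ψ_l^k. -/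
/-- The chain construction of the factorization method: from an element `Ψ l` of the
kernel of `A l`, descending with the adjoints `ψ_l^k = A_k* ⋯ A_{l-1}* ψ_l`
(encoded by the sequence `Ψ` with `Ψ j = (A j)* (Ψ (j+1))`) produces an eigenvector of
`A_k* A_k` with eigenvalue given by the recursion `λ_l = 0`, `λ_j = a_j λ_{j+1} + b_j`. -/
theorem statement_3
    (H : ℕ → Type*)
    [∀ k, NormedAddCommGroup (H k)] [∀ k, InnerProductSpace ℂ (H k)]
    [∀ k, CompleteSpace (H k)]
    (A : ∀ k, H k →L[ℂ] H (k + 1)) (a b : ℕ → ℝ) (ha : ∀ k, a k ≠ 0)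
    (hcomm : ∀ k, A k ∘L ContinuousLinearMap.adjoint (A k) =
      (a k : ℂ) • (ContinuousLinearMap.adjoint (A (k + 1)) ∘L A (k + 1)) + (b k : ℂ) • 1)
    (k l : ℕ) (hkl : k < l)
    (lam : ℕ → ℂ) (hlaml : lam l = 0)
    (hlam : ∀ j, k ≤ j → j < l → lam j = (a j : ℂ) * lam (j + 1) + (b j : ℂ))
    (Ψ : ∀ j, H j) (hker : A l (Ψ l) = 0)
    (hΨ : ∀ j, k ≤ j → j < l → Ψ j = ContinuousLinearMap.adjoint (A j) (Ψ (j + 1))) :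
    ContinuousLinearMap.adjoint (A k) (A k (Ψ k)) = lam k • Ψ k := by
  have key : ∀ d j, j + d = l → k ≤ j →
      ContinuousLinearMap.adjoint (A j) (A j (Ψ j)) = lam j • Ψ j := by
    intro d
    induction d with
    | zero =>
      intro j hj _
      simp only [Nat.add_zero] at hj
      subst hj
      rw [hker, hlaml, zero_smul, map_zero]
    | succ d ih =>
      intro j hj hkj
      have hjl : j < l := by omega
      have ih' := ih (j + 1) (by omega) (by omega)
      have hΨj := hΨ j hkj hjl
      have hc := congrArg (fun T => T (Ψ (j + 1))) (hcomm j)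
      simp only [ContinuousLinearMap.comp_apply, ContinuousLinearMap.add_apply,
        ContinuousLinearMap.smul_apply, ContinuousLinearMap.one_apply] at hc
      have hAj : A j (Ψ j) = lam j • Ψ (j + 1) := by
        rw [hΨj, hc, ih', hlam j hkj hjl, add_smul, smul_smul]
      rw [hAj, map_smul, hΨj]
  exact key (l - k) k (by omega) le_rfl
end

section
/- Let μ, ρ, η, η', B, g, h, h', φ, φ' : ℤ → ℝ and a, b ∈ ℝ with a ≠ 0 satisfy: μ(n) > 0, ρ(n) > 0, η(n) > 0, g(n) > 0 for all n; h'(n) ≠ 0 for all n; η(n)ρ(n) = B(n+1)ρ(n+1) for all n (the Pearson-type relation ρ^{next} = (Bρ)∘σ with ρ^{next} = ηρ); and η'(n) = η(n+1)·g(n+1) for all n (the relation η_{k+1} = (η_k g_k)∘σ). Set ρ'(n) := η(n)ρ(n). For ψ : ℤ → ℂ define the operators (Aψ)(n) := h(n)ψ(n+1)/μ(n) + φ(n)ψ(n), (A†ψ)(n) := h(n−1)η(n−1)ρ(n−1)ψ(n−1)/(ρ(n)μ(n)) + φ(n)η(n)ψ(n), (A'ψ)(n) := h'(n)ψ(n+1)/μ(n)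 + φ'(n)ψ(n), and (A'†ψ)(n) := h'(n−1)η'(n−1)ρ'(n−1)ψ(n−1)/(ρ'(n)μ(n)) + φ'(n)η'(n)ψ(n). Then the identity (A(A†ψ))(n) = a·(A'†(A'ψ))(n) + b·ψ(n), for all ψ : ℤ → ℂ and all n ∈ ℤ, holds if and only if the following two relations hold for all n ∈ ℤ: (i) h'(n)·φ'(n) = (1/a)·h(n)·φ(n+1)/g(n+1); and (ii) a·g(n)·( B(n)·h'(n−1)²/(μ(n)·μ(n−1)) − (1/a)·φ(n)²·η(n)/g(n) ) + b = B(n+1)·h(n)²/(μ(n+1)·μ(n)) − (1/a)·(φ(n+1)²·η(n+1)/g(n+1))·(h(n)²/h'(n)²). -/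
set_option maxHeartbeats 1000000


/-- The first-order Δ-difference operator `A = I(h/μ·S + φ)`:
`(Aψ)(n) = h(n)ψ(n+1)/μ(n) + φ(n)ψ(n)`. -/
noncomputable def opA (μ h φ : ℤ → ℝ) (ψ : ℤ → ℂ) (n : ℤ) : ℂ :=
  ((h n : ℝ) : ℂ) * ψ (n + 1) / ((μ n : ℝ) : ℂ) + ((φ n : ℝ) : ℂ) * ψ n

/-- The formal adjoint of `opA μ h φ` from the weighted `ℓ²` space with weight `ρ·μ` to
the one with weight `η·ρ·μ`:
`(A†ψ)(n) = h(n-1)η(n-1)ρ(n-1)ψ(n-1)/(ρ(n)μ(n)) + φ(n)η(n)ψ(n)`. -/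
noncomputable def opAdag (μ ρ η h φ : ℤ → ℝ) (ψ : ℤ → ℂ) (n : ℤ) : ℂ :=
  ((h (n - 1) * η (n - 1) * ρ (n - 1) : ℝ) : ℂ) * ψ (n - 1) / ((ρ n * μ n : ℝ) : ℂ) +
    ((φ n * η n : ℝ) : ℂ) * ψ n

/-- The main Proposition of the paper in the discrete model `𝕋 = ℤ`: the intertwining
relation `A A† = a A'† A' + b` between two consecutive links of the factorization chain
is equivalent to the two structural relations (i) and (ii) on the coefficient
functions. -/
theorem statement_10
    (μ ρ η η' B g h h' φ φ' : ℤ → ℝ) (a b : ℝ) (ha : a ≠ 0)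
    (hμ : ∀ n, 0 < μ n) (hρ : ∀ n, 0 < ρ n) (hη : ∀ n, 0 < η n) (hg : ∀ n, 0 < g n)
    (hh' : ∀ n, h' n ≠ 0)
    (hpearson : ∀ n, η n * ρ n = B (n + 1) * ρ (n + 1))
    (hη' : ∀ n, η' n = η (n + 1) * g (n + 1)) :
    (∀ (ψ : ℤ → ℂ) (n : ℤ),
        opA μ h φ (opAdag μ ρ η h φ ψ) n =
          (a : ℂ) * opAdag μ (fun m => η m * ρ m) η' h' φ' (opA μ h' φ' ψ) n +
            (b : ℂ) * ψ n) ↔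
      (∀ n : ℤ,
        (h' n * φ' n = (1 / a) * (h n * φ (n + 1) / g (n + 1))) ∧
        (a * g n * (B n * (h' (n - 1)) ^ 2 / (μ n * μ (n - 1)) -
              (1 / a) * ((φ n) ^ 2 * η n / g n)) + b =
          B (n + 1) * (h n) ^ 2 / (μ (n + 1) * μ n) -
            (1 / a) * ((φ (n + 1)) ^ 2 * η (n + 1) / g (n + 1)) *
              ((h n) ^ 2 / (h' n) ^ 2))) := by
  have hμne : ∀ n, μ n ≠ 0 := fun n => (hμ n).ne'
  have hρne : ∀ n, ρ n ≠ 0 := fun n => (hρ n).ne'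
  have hηne : ∀ n, η n ≠ 0 := fun n => (hη n).ne'
  have hgne : ∀ n, g n ≠ 0 := fun n => (hg n).ne'
  constructor
  · intro H n
    have hne1 : n + 1 - 1 = n := by ring
    have hne2 : n - 1 + 1 = n := by ring
    have h1 := H (fun m => if m = n + 1 then 1 else 0) n
    have h0 := H (fun m => if m = n then 1 else 0) n
    simp only [opA, opAdag, hne1, hne2] at h1 h0
    simp only [show n - 1 ≠ n + 1 by omega, show n + 1 ≠ n by omega, show (n:ℤ) ≠ n + 1 by omega,
      show n - 1 ≠ n by omega, show (n:ℤ) ≠ n - 1 by omega, show n + 1 ≠ n - 1 by omega,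
      if_neg, if_pos, ite_true, ite_false, if_true, if_false, ne_eq, not_false_iff,
      mul_zero, zero_mul, zero_div, add_zero, zero_add, mul_one, one_mul, div_one] at h1 h0
    have hC1 : h n * (φ (n + 1) * η (n + 1)) / μ n = a * (φ' n * η' n * (h' n / μ n)) := by
      exact_mod_cast h1
    have hC0 : h n * (h n * η n * ρ n / (ρ (n + 1) * μ (n + 1))) / μ n + φ n * (φ n * η n) =
        a * (h' (n - 1) * η' (n - 1) * (η (n - 1) * ρ (n - 1)) * (h' (n - 1) / μ (n - 1)) /
            (η n * ρ n * μ n) + φ' n * η' n * φ' n) + b := by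
      exact_mod_cast h0
    -- derive (i) at n
    have h2 : h n * φ (n + 1) * η (n + 1) = a * g (n + 1) * (h' n * φ' n) * η (n + 1) := by
      rw [hη' n] at hC1
      field_simp [ha, hμne, hρne, hηne, hgne, hh'] at hC1
      linear_combination η (n + 1) * hC1
    have hi : h' n * φ' n = (1 / a) * (h n * φ (n + 1) / g (n + 1)) := by
      have h3 : h n * φ (n + 1) = a * g (n + 1) * (h' n * φ' n) :=
        mul_right_cancel₀ (hηne (n + 1)) h2
      field_simp [ha, hgne]
      linear_combination -h3
    refine ⟨hi, ?_⟩
    -- substitutions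
    have hφ'n : φ' n = h n * φ (n + 1) / (a * (g (n + 1) * h' n)) := by
      rw [eq_div_iff (by simp [ha, hgne (n+1), hh' n])]
      field_simp [ha, hgne] at hi
      linear_combination hi
    have hB1 : B (n + 1) = η n * ρ n / ρ (n + 1) := by
      rw [eq_div_iff (hρne (n + 1))]
      linear_combination (hpearson n).symm
    have hB0 : B n = η (n - 1) * ρ (n - 1) / ρ n := by
      have hp := hpearson (n - 1)
      simp only [show n - 1 + 1 = n by ring] at hp
      rw [eq_div_iff (hρne n)]
      linear_combination hp.symm
    have hη'm : η' (n - 1) = η n * g n := by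
      have := hη' (n - 1)
      simpa [show n - 1 + 1 = n by ring] using this
    have t1 : h n * (h n * η n * ρ n / (ρ (n + 1) * μ (n + 1))) / μ n =
        B (n + 1) * (h n) ^ 2 / (μ (n + 1) * μ n) := by
      rw [hB1]; field_simp [hμne, hρne]
    have t2 : φ n * (φ n * η n) = a * g n * ((1 / a) * ((φ n) ^ 2 * η n / g n)) := by
      field_simp [ha, hgne]
    have t3 : a * (h' (n - 1) * η' (n - 1) * (η (n - 1) * ρ (n - 1)) * (h' (n - 1) / μ (n - 1)) /
          (η n * ρ n * μ n)) = a * g n * (B n * (h' (n - 1)) ^ 2 / (μ n * μ (n - 1))) := by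
      rw [hη'm, hB0]; field_simp [hμne, hρne, hηne]
    have t4 : a * (φ' n * η' n * φ' n) =
        (1 / a) * ((φ (n + 1)) ^ 2 * η (n + 1) / g (n + 1)) * ((h n) ^ 2 / (h' n) ^ 2) := by
      rw [hφ'n, hη' n]; field_simp [ha, hgne, hh']
    linear_combination t1 + t2 - t3 - t4 - hC0
  · intro H ψ n
    obtain ⟨hi, hii⟩ := H n
    have him := (H (n - 1)).1
    simp only [show n - 1 + 1 = n by ring] at him
    have hne1 : n + 1 - 1 = n := by ring
    have hne2 : n - 1 + 1 = n := by ring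
    have hη'm : η' (n - 1) = η n * g n := by
      have := hη' (n - 1)
      simpa [show n - 1 + 1 = n by ring] using this
    -- polynomial forms of (i) at n and n-1
    have hi' : a * g (n + 1) * (h' n * φ' n) = h n * φ (n + 1) := by
      field_simp [ha, hgne] at hi
      linear_combination hi
    have him' : a * g n * (h' (n - 1) * φ' (n - 1)) = h (n - 1) * φ n := by
      field_simp [ha, hgne] at him
      linear_combination him
    -- coefficient identities (real)
    have hC1 : h n * (φ (n + 1) * η (n + 1)) / μ n = a * (φ' n * η' n * (h' n / μ n)) := by
      rw [hη' n]
      field_simp [ha, hμne, hηne, hgne]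
      linear_combination -hi'
    have hCm : φ n * (h (n - 1) * η (n - 1) * ρ (n - 1) / (ρ n * μ n)) =
        a * (h' (n - 1) * η' (n - 1) * (η (n - 1) * ρ (n - 1)) * φ' (n - 1) /
          (η n * ρ n * μ n)) := by
      rw [hη'm]
      field_simp [ha, hμne, hρne, hηne, hgne]
      linear_combination -him'
    have hφ'n : φ' n = h n * φ (n + 1) / (a * (g (n + 1) * h' n)) := by
      rw [eq_div_iff (by simp [ha, hgne (n+1), hh' n])]
      field_simp [ha, hgne] at hi
      linear_combination hi
    have hB1 : B (n + 1) = η n * ρ n / ρ (n + 1) := by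
      rw [eq_div_iff (hρne (n + 1))]
      linear_combination (hpearson n).symm
    have hB0 : B n = η (n - 1) * ρ (n - 1) / ρ n := by
      have hp := hpearson (n - 1)
      simp only [show n - 1 + 1 = n by ring] at hp
      rw [eq_div_iff (hρne n)]
      linear_combination hp.symm
    have t1 : h n * (h n * η n * ρ n / (ρ (n + 1) * μ (n + 1))) / μ n =
        B (n + 1) * (h n) ^ 2 / (μ (n + 1) * μ n) := by
      rw [hB1]; field_simp [hμne, hρne]
    have t2 : φ n * (φ n * η n) = a * g n * ((1 / a) * ((φ n) ^ 2 * η n / g n)) := by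
      field_simp [ha, hgne]
    have t3 : a * (h' (n - 1) * η' (n - 1) * (η (n - 1) * ρ (n - 1)) * (h' (n - 1) / μ (n - 1)) /
          (η n * ρ n * μ n)) = a * g n * (B n * (h' (n - 1)) ^ 2 / (μ n * μ (n - 1))) := by
      rw [hη'm, hB0]; field_simp [hμne, hρne, hηne]
    have t4 : a * (φ' n * η' n * φ' n) =
        (1 / a) * ((φ (n + 1)) ^ 2 * η (n + 1) / g (n + 1)) * ((h n) ^ 2 / (h' n) ^ 2) := by
      rw [hφ'n, hη' n]; field_simp [ha, hgne, hh']
    have hC0 : h n * (h n * η n * ρ n / (ρ (n + 1) * μ (n + 1))) / μ n + φ n * (φ n * η n) =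
        a * (h' (n - 1) * η' (n - 1) * (η (n - 1) * ρ (n - 1)) * (h' (n - 1) / μ (n - 1)) /
            (η n * ρ n * μ n) + φ' n * η' n * φ' n) + b := by
      linear_combination t1 + t2 - t3 - t4 - hii
    -- cast to ℂ
    have c1 := congrArg (fun x : ℝ => (x : ℂ)) hC1
    have c0 := congrArg (fun x : ℝ => (x : ℂ)) hC0
    have cm := congrArg (fun x : ℝ => (x : ℂ)) hCm
    push_cast at c1 c0 cm
    simp only [opA, opAdag, hne1, hne2]
    push_cast
    linear_combination ψ (n + 1) * c1 + ψ n * c0 + ψ (n - 1) * cm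
end
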